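/- Variational formula for the trace exponential (used to prove Lieb's theorem): for a Hermitian matrix H and positive definite matrix A of the same size, tr(exp(H + log A)) = max over positive definite X of { tr(X H) - D(X‖A) + tr(X) }, where D(X‖A) = tr(X(log X - log A)) is the quantum relative entropy. -/

import Mathlib

open Matrix
open scoped ComplexOrder

section Helpers
variable {n : ℕ}

lemma mul_star_self' (U : Matrix.unitaryGroup (Fin n) ℂ) :
    (U : Matrix (Fin n) (Fin n) ℂ) * star (U : Matrix (Fin n) (Fin n) ℂ) = 1 :=
  Unitary.coe_mul_star_self U

lemma star_mul_self' (U : Matrix.unitaryGroup (Fin n) ℂ) :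
    star (U : Matrix (Fin n) (Fin n) ℂ) * (U : Matrix (Fin n) (Fin n) ℂ) = 1 :=
  Unitary.coe_star_mul_self U

lemma trace_unit_conj (U : Matrix.unitaryGroup (Fin n) ℂ) (P : Matrix (Fin n) (Fin n) ℂ) :
    ((U : Matrix (Fin n) (Fin n) ℂ) * P * star (U : Matrix (Fin n) (Fin n) ℂ)).trace = P.trace := by
  rw [Matrix.trace_mul_comm, ← mul_assoc, star_mul_self', one_mul]

lemma trace_cfc' {X : Matrix (Fin n) (Fin n) ℂ} (hX : X.IsHermitian) (f : ℝ → ℝ) :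
    (hX.cfc f).trace = ∑ i, (f (hX.eigenvalues i) : ℂ) := by
  rw [Matrix.IsHermitian.cfc, Unitary.conjStarAlgAut_apply, trace_unit_conj, Matrix.trace_diagonal]
  rfl

lemma cfc_mul_cfc_conj {X M : Matrix (Fin n) (Fin n) ℂ}
    (hX : X.IsHermitian) (hM : M.IsHermitian) (f g : ℝ → ℝ) :
    hX.cfc f * hM.cfc g =
      (hX.eigenvectorUnitary : Matrix (Fin n) (Fin n) ℂ) *
        (Matrix.diagonal (RCLike.ofReal ∘ f ∘ hX.eigenvalues) *
          ((star (hX.eigenvectorUnitary : Matrix (Fin n) (Fin n) ℂ) *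
            (hM.eigenvectorUnitary : Matrix (Fin n) (Fin n) ℂ)) *
           Matrix.diagonal (RCLike.ofReal ∘ g ∘ hM.eigenvalues) *
           star (star (hX.eigenvectorUnitary : Matrix (Fin n) (Fin n) ℂ) *
            (hM.eigenvectorUnitary : Matrix (Fin n) (Fin n) ℂ)))) *
        star (hX.eigenvectorUnitary : Matrix (Fin n) (Fin n) ℂ) := by
  simp only [Matrix.IsHermitian.cfc, Unitary.conjStarAlgAut_apply, StarMul.star_mul, star_star, mul_assoc,
    mul_star_self', mul_one]

lemma trace_cfc_mul_cfc_re {X M : Matrix (Fin n) (Fin n) ℂ}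
    (hX : X.IsHermitian) (hM : M.IsHermitian) (f g : ℝ → ℝ) :
    ((hX.cfc f * hM.cfc g).trace).re =
      ∑ i, ∑ j, f (hX.eigenvalues i) * g (hM.eigenvalues j) *
        Complex.normSq ((star (hX.eigenvectorUnitary : Matrix (Fin n) (Fin n) ℂ) *
          (hM.eigenvectorUnitary : Matrix (Fin n) (Fin n) ℂ)) i j) := by
  set W := star (hX.eigenvectorUnitary : Matrix (Fin n) (Fin n) ℂ) *
      (hM.eigenvectorUnitary : Matrix (Fin n) (Fin n) ℂ) with hW
  rw [cfc_mul_cfc_conj hX hM f g, trace_unit_conj]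
  have key : (Matrix.diagonal (RCLike.ofReal ∘ f ∘ hX.eigenvalues) *
      (W * Matrix.diagonal (RCLike.ofReal ∘ g ∘ hM.eigenvalues) * star W)).trace
      = ((∑ i, ∑ j, f (hX.eigenvalues i) * g (hM.eigenvalues j) *
          Complex.normSq (W i j) : ℝ) : ℂ) := by
    rw [Matrix.trace]
    push_cast
    apply Finset.sum_congr rfl
    intro i _
    rw [Matrix.diag_apply, Matrix.diagonal_mul, Matrix.mul_apply, Finset.mul_sum]
    apply Finset.sum_congr rfl
    intro j _
    rw [Matrix.mul_diagonal, Matrix.star_apply]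
    simp only [Function.comp_apply, RCLike.star_def]
    have h := Complex.mul_conj (W i j)
    have e1 : ∀ x : ℝ, (@RCLike.ofReal ℂ _ x) = Complex.ofReal x := fun _ => rfl
    simp only [e1]
    push_cast
    linear_combination ((f (hX.eigenvalues i) : ℂ) * (g (hM.eigenvalues j) : ℂ)) * h
  rw [key, Complex.ofReal_re]

lemma trace_cfc'_re {X : Matrix (Fin n) (Fin n) ℂ} (hX : X.IsHermitian) (f : ℝ → ℝ) :
    ((hX.cfc f).trace).re = ∑ i, f (hX.eigenvalues i) := by
  rw [trace_cfc']
  rw [Complex.re_sum]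
  simp

lemma sum_normSq_row {W : Matrix (Fin n) (Fin n) ℂ} (h : W * star W = 1) (i : Fin n) :
    ∑ j, Complex.normSq (W i j) = 1 := by
  have h1 := congrFun (congrFun h i) i
  rw [Matrix.mul_apply] at h1
  rw [Matrix.one_apply_eq] at h1
  have h2 : ∑ j, ((Complex.normSq (W i j) : ℝ) : ℂ) = 1 := by
    rw [← h1]
    refine Finset.sum_congr rfl fun j _ => ?_
    rw [Matrix.star_apply, RCLike.star_def, Complex.mul_conj]
  have := congrArg Complex.re h2
  rw [Complex.re_sum] at this
  simpa using this

lemma sum_normSq_col {W : Matrix (Fin n) (Fin n) ℂ} (h : star W * W = 1) (j : Fin n) :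
    ∑ i, Complex.normSq (W i j) = 1 := by
  have h' : (star W) * star (star W) = 1 := by rwa [star_star]
  have := sum_normSq_row h' j
  simp only [Matrix.star_apply, RCLike.star_def, Complex.normSq_conj] at this
  exact this

lemma pointwise_ineq {l e p : ℝ} (hl : 0 < l) (hp : 0 ≤ p) :
    (l * e) * p - (l * Real.log l) * p + l * p ≤ Real.exp e * p := by
  have key : l * e - l * Real.log l + l ≤ Real.exp e := by
    have h1 : e - Real.log l + 1 ≤ Real.exp (e - Real.log l) := Real.add_one_le_exp _
    have h2 : l * Real.exp (e - Real.log l) = Real.exp e := by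
      rw [Real.exp_sub, Real.exp_log hl]
      field_simp
    nlinarith [mul_le_mul_of_nonneg_left h1 hl.le]
  nlinarith [mul_le_mul_of_nonneg_right key hp]

lemma klein_bound {X M : Matrix (Fin n) (Fin n) ℂ} (hX : X.PosDef) (hM : M.IsHermitian) :
    ((X * M).trace).re - ((X * cfc Real.log X).trace).re + (X.trace).re
      ≤ ((cfc Real.exp M).trace).re := by
  have hXh : X.IsHermitian := hX.1
  set l : Fin n → ℝ := hXh.eigenvalues with hldef
  set e : Fin n → ℝ := hM.eigenvalues with hedef
  set W : Matrix (Fin n) (Fin n) ℂ :=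
    star (hXh.eigenvectorUnitary : Matrix (Fin n) (Fin n) ℂ) *
      (hM.eigenvectorUnitary : Matrix (Fin n) (Fin n) ℂ) with hWdef
  set p : Fin n → Fin n → ℝ := fun i j => Complex.normSq (W i j) with hpdef
  have hXid : hXh.cfc (fun x : ℝ => x) = X := by
    rw [← Matrix.IsHermitian.cfc_eq]; exact cfc_id' ℝ X hXh.isSelfAdjoint
  have hMid : hM.cfc (fun x : ℝ => x) = M := by
    rw [← Matrix.IsHermitian.cfc_eq]; exact cfc_id' ℝ M hM.isSelfAdjoint
  -- W is unitary
  have hWW : W * star W = 1 := by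
    rw [hWdef, StarMul.star_mul, star_star, mul_assoc,
      ← mul_assoc (hM.eigenvectorUnitary : Matrix (Fin n) (Fin n) ℂ),
      mul_star_self', one_mul, star_mul_self']
  have hWW' : star W * W = 1 := by
    rw [hWdef, StarMul.star_mul, star_star, mul_assoc,
      ← mul_assoc (hXh.eigenvectorUnitary : Matrix (Fin n) (Fin n) ℂ),
      mul_star_self', one_mul, star_mul_self']
  have hrow : ∀ i, ∑ j, p i j = 1 := fun i => sum_normSq_row hWW i
  have hcol : ∀ j, ∑ i, p i j = 1 := fun j => sum_normSq_col hWW' j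
  -- trace identities
  have t1 : ((X * M).trace).re = ∑ i, ∑ j, (l i * e j) * p i j := by
    conv_lhs => rw [← hXid, ← hMid]
    rw [trace_cfc_mul_cfc_re]
  have t2 : ((X * cfc Real.log X).trace).re = ∑ i, l i * Real.log (l i) := by
    have hmul : X * cfc Real.log X = hXh.cfc (fun x => x * Real.log x) := by
      rw [← Matrix.IsHermitian.cfc_eq,
        cfc_mul _ _ X ((Matrix.finite_real_spectrum (A := X)).continuousOn _)
          ((Matrix.finite_real_spectrum (A := X)).continuousOn _),
        cfc_id' ℝ X hXh.isSelfAdjoint]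
    rw [hmul, trace_cfc'_re]
  have t3 : (X.trace).re = ∑ i, l i := by
    conv_lhs => rw [← hXid]
    rw [trace_cfc'_re]
  have t4 : ((cfc Real.exp M).trace).re = ∑ j, Real.exp (e j) := by
    rw [hM.cfc_eq, trace_cfc'_re]
  rw [t1, t2, t3, t4]
  have e2 : ∑ i, l i * Real.log (l i) = ∑ i, ∑ j, (l i * Real.log (l i)) * p i j := by
    refine Finset.sum_congr rfl fun i _ => ?_
    rw [← Finset.mul_sum, hrow i, mul_one]
  have e3 : ∑ i, l i = ∑ i, ∑ j, l i * p i j := by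
    refine Finset.sum_congr rfl fun i _ => ?_
    rw [← Finset.mul_sum, hrow i, mul_one]
  have e4 : ∑ j, Real.exp (e j) = ∑ i, ∑ j, Real.exp (e j) * p i j := by
    rw [Finset.sum_comm]
    refine Finset.sum_congr rfl fun j _ => ?_
    rw [← Finset.mul_sum, hcol j, mul_one]
  rw [e2, e3, e4, ← Finset.sum_sub_distrib, ← Finset.sum_add_distrib]
  refine Finset.sum_le_sum fun i _ => ?_
  rw [← Finset.sum_sub_distrib, ← Finset.sum_add_distrib]
  refine Finset.sum_le_sum fun j _ => ?_
  exact pointwise_ineq (hX.eigenvalues_pos i) (Complex.normSq_nonneg _)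

lemma posDef_conj {A B : Matrix (Fin n) (Fin n) ℂ} (hA : A.PosDef) (hB : IsUnit B) :
    (B * A * Bᴴ).PosDef := by
  refine Matrix.PosDef.of_dotProduct_mulVec_pos (hA.posSemidef.mul_mul_conjTranspose_same B).1 fun x hx => ?_
  have hBH : IsUnit Bᴴ := by
    rw [Matrix.isUnit_iff_isUnit_det, Matrix.det_conjTranspose, isUnit_star,
      ← Matrix.isUnit_iff_isUnit_det]
    exact hB
  have hx' : Bᴴ *ᵥ x ≠ 0 := by
    intro hc
    exact hx <| (Matrix.mulVec_injective_iff_isUnit.mpr hBH).eq_iff' (by simp) |>.mp hc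
  have h := hA.dotProduct_mulVec_pos hx'
  simpa only [star_mulVec, Matrix.dotProduct_mulVec, Matrix.vecMul_vecMul,
    Matrix.conjTranspose_conjTranspose] using h

lemma cfc_exp_posDef {M : Matrix (Fin n) (Fin n) ℂ} (hM : M.IsHermitian) :
    (cfc Real.exp M).PosDef := by
  rw [hM.cfc_eq, Matrix.IsHermitian.cfc, Unitary.conjStarAlgAut_apply, Matrix.star_eq_conjTranspose]
  exact posDef_conj
    (Matrix.PosDef.diagonal fun i => by
      have : (0:ℂ) < ((Real.exp (hM.eigenvalues i) : ℝ) : ℂ) := by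
        rw [Complex.zero_lt_real]
        exact Real.exp_pos _
      exact this)
    ⟨Unitary.toUnits hM.eigenvectorUnitary, rfl⟩

end Helpers

/-- Variational formula for the trace exponential: for a Hermitian matrix `H` and a
positive definite matrix `A`,
`tr (exp (H + log A)) = max_{X ≻ 0} { tr (X H) - D(X‖A) + tr X }`, where
`D(X‖A) = tr (X (log X - log A))` is the quantum relative entropy.  The maximum is
expressed via `IsGreatest`. -/
theorem trace_exp_variational {n : ℕ} (H A : Matrix (Fin n) (Fin n) ℂ)
    (hH : H.IsHermitian) (hA : A.PosDef) :
    IsGreatest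
      {r : ℝ | ∃ X : Matrix (Fin n) (Fin n) ℂ, X.PosDef ∧
        r = ((X * H).trace).re
          - ((X * (cfc Real.log X - cfc Real.log A)).trace).re
          + (X.trace).re}
      (((cfc Real.exp (H + cfc Real.log A)).trace).re) := by
  set M : Matrix (Fin n) (Fin n) ℂ := H + cfc Real.log A with hMdef
  have hlogA : (cfc Real.log A).IsHermitian := cfc_predicate Real.log A
  have hM : M.IsHermitian := hH.add hlogA
  constructor
  · -- membership
    refine ⟨cfc Real.exp M, cfc_exp_posDef hM, ?_⟩
    have hlog : cfc Real.log (cfc Real.exp M) = M := by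
      have h := cfc_comp Real.log Real.exp M hM.isSelfAdjoint
        (((Matrix.finite_real_spectrum (A := M)).image _).continuousOn _)
        ((Matrix.finite_real_spectrum (A := M)).continuousOn _)
      rw [← h, show Real.log ∘ Real.exp = id from funext Real.log_exp]
      exact cfc_id ℝ M hM.isSelfAdjoint
    rw [hlog, hMdef, add_sub_cancel_right]
    ring
  · -- upper bound
    rintro r ⟨X, hXpd, rfl⟩
    have hb := klein_bound hXpd hM
    have expand : ((X * M).trace).re
        = ((X * H).trace).re + ((X * cfc Real.log A).trace).re := by
      rw [hMdef, mul_add, Matrix.trace_add, Complex.add_re]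
    have expand2 : ((X * (cfc Real.log X - cfc Real.log A)).trace).re
        = ((X * cfc Real.log X).trace).re - ((X * cfc Real.log A).trace).re := by
      rw [mul_sub, Matrix.trace_sub, Complex.sub_re]
    linarith
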